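/- In the quantum torus algebra of the A₂ root lattice (generators X_γ for γ in the root lattice, with X_γ X_δ = q^{2⟨γ,δ⟩} X_δ X_γ and ⟨α₁,α₂⟩ = 1, X_{γ+δ} = q^{-⟨γ,δ⟩}X_γX_δ), the wall-crossing formula holds: Ψ(-X_{α₁})Ψ(-X_{α₂}) = Ψ(-X_{α₂})Ψ(-X_{α₁+α₂})Ψ(-X_{α₁}), and this identity determines the degeneracies Ω = 1 for the three positive roots α₁, α₂, α₁+α₂ uniquely: no other finite product of quantum dilogarithms Ψ(-X_β)^{n_β} over positive roots β, ordered by decreasing then increasing slope, equals the left side. -/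

import Mathlib

open scoped BigOperators

/-- The finite q-Pochhammer symbol `(q²;q²)_d = ∏_{k=0}^{d-1} (1 - q^{2k+2})`. -/
noncomputable def qfac (q : ℂ) (d : ℕ) : ℂ := ∏ k ∈ Finset.range d, (1 - q ^ (2 * k + 2))

/-- The operator `Ψ(-X_{α₁})` in the standard module of the A₂ quantum torus
(`X_{α₁}` is the diagonal operator `q^{2n}`, `X_{α₂}` the shift, so that
`X_{α₁}X_{α₂} = q² X_{α₂}X_{α₁}`, i.e. `⟨α₁,α₂⟩ = 1`). -/
noncomputable def PsiX1 (q : ℂ) (v : ℕ → ℂ) : ℕ → ℂ :=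
  fun n => (∑' d : ℕ, q ^ d * (-q ^ (2 * n)) ^ d / qfac q d) * v n

/-- The operator `Ψ(-X_{α₂})`. -/
noncomputable def PsiX2 (q : ℂ) (v : ℕ → ℂ) : ℕ → ℂ :=
  fun n => ∑ d ∈ Finset.range (n + 1), (-1) ^ d * q ^ d / qfac q d * v (n - d)

/-- The operator `Ψ(-X_{α₁+α₂})`, `X_{α₁+α₂} = q⁻¹X_{α₁}X_{α₂}`. -/
noncomputable def PsiX12 (q : ℂ) (v : ℕ → ℂ) : ℕ → ℂ :=
  fun n => ∑ d ∈ Finset.range (n + 1),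
    (-1) ^ d * q ^ (d * (2 * n + 1 - d)) / qfac q d * v (n - d)

lemma pow_ne_one' {q : ℂ} (hq : ‖q‖ < 1) {j : ℕ} (hj : 1 ≤ j) : q ^ j ≠ 1 := by
  intro h
  have : ‖q ^ j‖ < 1 := by
    rw [norm_pow]
    exact pow_lt_one₀ (norm_nonneg q) hq (by omega)
  rw [h, norm_one] at this; exact lt_irrefl _ this

lemma one_sub_pow_ne_zero {q : ℂ} (hq : ‖q‖ < 1) {j : ℕ} (hj : 1 ≤ j) : (1 : ℂ) - q ^ j ≠ 0 := by
  intro h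
  exact pow_ne_one' hq hj (by linear_combination -h)

lemma qfac_ne_zero {q : ℂ} (hq : ‖q‖ < 1) (d : ℕ) : qfac q d ≠ 0 :=
  Finset.prod_ne_zero_iff.2 fun k _ => one_sub_pow_ne_zero hq (by omega)

lemma qfac_succ (q : ℂ) (d : ℕ) : qfac q (d + 1) = qfac q d * (1 - q ^ (2 * d + 2)) :=
  Finset.prod_range_succ _ _

noncomputable def Fq (q : ℂ) (n : ℕ) : ℂ := ∑' d : ℕ, q ^ d * (-q ^ (2 * n)) ^ d / qfac q d

noncomputable def aa (q : ℂ) (n d : ℕ) : ℂ := q ^ d * (-q ^ (2 * n)) ^ d / qfac q d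

lemma Fq_eq (q : ℂ) (n : ℕ) : Fq q n = ∑' d, aa q n d := rfl

lemma aa_eq (q : ℂ) (n d : ℕ) : aa q n d = (-1) ^ d * q ^ ((2 * n + 1) * d) / qfac q d := by
  unfold aa
  rw [neg_pow, ← pow_mul]
  ring_nf

lemma aa_zero (q : ℂ) (n : ℕ) : aa q n 0 = 1 := by
  simp [aa, qfac]

lemma norm_aa (q : ℂ) (n d : ℕ) :
    ‖aa q n d‖ = ‖q‖ ^ ((2 * n + 1) * d) / ‖qfac q d‖ := by
  rw [aa_eq, norm_div, norm_mul, norm_pow, norm_pow, norm_neg, norm_one, one_pow, one_mul]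

lemma summable_norm_aa {q : ℂ} (hq : ‖q‖ < 1) (n : ℕ) : Summable fun d => ‖aa q n d‖ := by
  set s := ‖q‖ with hs
  have hs0 : 0 ≤ s := norm_nonneg q
  set r := (1 + s) / 2 with hr
  have hr0 : 0 < r := by rw [hr]; linarith
  apply summable_of_ratio_norm_eventually_le (r := r) (by rw [hr]; linarith)
  have htend : Filter.Tendsto (fun d : ℕ => s ^ (2 * d + 2)) Filter.atTop (nhds 0) := by
    have h1 := tendsto_pow_atTop_nhds_zero_of_lt_one hs0 hq
    have h2 : Filter.Tendsto (fun d : ℕ => 2 * d + 2) Filter.atTop Filter.atTop :=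
      Filter.tendsto_atTop_mono (fun d => by simp only [id_eq]; omega) Filter.tendsto_id
    exact h1.comp h2
  have hev : ∀ᶠ d : ℕ in Filter.atTop, s ^ (2 * d + 2) ≤ (1 - s) / 2 :=
    htend.eventually_le_const (by linarith)
  filter_upwards [hev] with d hd
  rw [norm_norm, norm_norm, norm_aa, norm_aa, qfac_succ, norm_mul]
  have hB : 0 < ‖qfac q d‖ := norm_pos_iff.mpr (qfac_ne_zero hq d)
  have hC : r ≤ ‖1 - q ^ (2 * d + 2)‖ := by
    have h3 : ‖(1:ℂ)‖ - ‖q ^ (2 * d + 2)‖ ≤ ‖1 - q ^ (2 * d + 2)‖ := norm_sub_norm_le _ _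
    rw [norm_one, norm_pow] at h3
    rw [hr]; linarith
  have hC0 : 0 < ‖1 - q ^ (2 * d + 2)‖ := lt_of_lt_of_le hr0 hC
  rw [mul_div_assoc']
  rw [div_le_div_iff₀ (mul_pos hB hC0) hB]
  have hA : s ^ ((2 * n + 1) * (d + 1)) = s ^ ((2 * n + 1) * d) * s ^ (2 * n + 1) := by
    rw [← pow_add]; ring_nf
  have h4 : s ^ (2 * n + 1) ≤ s := by
    calc s ^ (2 * n + 1) ≤ s ^ 1 := pow_le_pow_of_le_one hs0 (le_of_lt hq) (by omega)
    _ = s := pow_one s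
  have h5 : s ≤ r * r := by rw [hr]; nlinarith
  have h6 : s ^ (2 * n + 1) ≤ r * ‖1 - q ^ (2 * d + 2)‖ := by
    calc s ^ (2 * n + 1) ≤ r * r := le_trans h4 h5
    _ ≤ r * ‖1 - q ^ (2 * d + 2)‖ := by nlinarith
  have h7 : (0:ℝ) ≤ s ^ ((2 * n + 1) * d) := pow_nonneg hs0 _
  rw [hA]
  calc s ^ ((2 * n + 1) * d) * s ^ (2 * n + 1) * ‖qfac q d‖
      ≤ s ^ ((2 * n + 1) * d) * (r * ‖1 - q ^ (2 * d + 2)‖) * ‖qfac q d‖ := by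
        apply mul_le_mul_of_nonneg_right _ (le_of_lt hB)
        exact mul_le_mul_of_nonneg_left h6 h7
    _ = r * s ^ ((2 * n + 1) * d) * (‖qfac q d‖ * ‖1 - q ^ (2 * d + 2)‖) := by ring

lemma summable_aa {q : ℂ} (hq : ‖q‖ < 1) (n : ℕ) : Summable fun d => aa q n d :=
  (summable_norm_aa hq n).of_norm

lemma Fq_succ {q : ℂ} (hq : ‖q‖ < 1) (n : ℕ) :
    Fq q (n + 1) = (1 + q ^ (2 * n + 1)) * Fq q n := by
  have hsub : Fq q (n + 1) - Fq q n = ∑' d, (aa q (n + 1) d - aa q n d) := by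
    rw [Fq_eq, Fq_eq, ← Summable.tsum_sub (summable_aa hq (n + 1)) (summable_aa hq n)]
  have hterm : ∀ e : ℕ, aa q (n + 1) (e + 1) - aa q n (e + 1) = q ^ (2 * n + 1) * aa q n e := by
    intro e
    rw [aa_eq, aa_eq, aa_eq]
    have h1 : qfac q (e + 1) = qfac q e * (1 - q ^ (2 * e + 2)) := qfac_succ q e
    have h2 : qfac q (e + 1) ≠ 0 := qfac_ne_zero hq (e + 1)
    have h3 : qfac q e ≠ 0 := qfac_ne_zero hq e
    rw [h1] at h2 ⊢
    have h4 : (1 : ℂ) - q ^ (2 * e + 2) ≠ 0 := one_sub_pow_ne_zero hq (by omega)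
    field_simp
    have e1 : (2 * (n + 1) + 1) * (e + 1) = (2 * n + 1) * (e + 1) + (2 * e + 2) := by ring
    have e2 : (2 * n + 1) * (e + 1) = (2 * n + 1) + (2 * n + 1) * e := by ring
    rw [e1, pow_add, e2, pow_add, pow_succ]
    ring
  have hzero : aa q (n + 1) 0 - aa q n 0 = 0 := by rw [aa_zero, aa_zero, sub_self]
  have hsummb : Summable fun d => aa q (n + 1) d - aa q n d :=
    (summable_aa hq (n + 1)).sub (summable_aa hq n)
  rw [Summable.tsum_eq_zero_add hsummb, hzero, zero_add] at hsub
  have : ∑' e, (aa q (n + 1) (e + 1) - aa q n (e + 1)) = q ^ (2 * n + 1) * Fq q n := by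
    rw [Fq_eq, ← tsum_mul_left]
    exact tsum_congr hterm
  rw [this] at hsub
  linear_combination hsub

lemma Fq_ne_zero {q : ℂ} (hq : ‖q‖ < 1) (hq0 : q ≠ 0) (n : ℕ) : Fq q n ≠ 0 := by
  -- 1 + q^(2m+1) ≠ 0
  have hu : ∀ m : ℕ, (1 : ℂ) + q ^ (2 * m + 1) ≠ 0 := by
    intro m h
    have h1 : ‖q ^ (2 * m + 1)‖ < 1 := by
      rw [norm_pow]; exact pow_lt_one₀ (norm_nonneg q) hq (by omega)
    have h2 : q ^ (2 * m + 1) = -1 := by linear_combination h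
    rw [h2, norm_neg, norm_one] at h1; exact lt_irrefl _ h1
  -- upward propagation of vanishing
  have hup : ∀ n N : ℕ, n ≤ N → Fq q n = 0 → Fq q N = 0 := by
    intro n N hnN h0
    induction N, hnN using Nat.le_induction with
    | base => exact h0
    | succ N hN ih => rw [Fq_succ hq N, ih, mul_zero]
  -- bound: ‖Fq q N - 1‖ ≤ ‖q‖^(2N) * S
  set S : ℝ := ∑' e : ℕ, ‖aa q 0 (e + 1)‖ with hS
  have hS0 : 0 ≤ S := tsum_nonneg fun e => norm_nonneg _
  have hbound : ∀ N : ℕ, ‖Fq q N - 1‖ ≤ ‖q‖ ^ (2 * N) * S := by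
    intro N
    have h1 : Fq q N = 1 + ∑' e, aa q N (e + 1) := by
      rw [Fq_eq, Summable.tsum_eq_zero_add (summable_aa hq N), aa_zero]
    rw [h1, add_sub_cancel_left]
    have hsN : Summable fun e => ‖aa q N (e + 1)‖ := by
      exact (summable_norm_aa hq N).comp_injective (add_left_injective 1)
    have hs0' : Summable fun e => ‖q‖ ^ (2 * N) * ‖aa q 0 (e + 1)‖ := by
      exact (((summable_norm_aa hq 0).comp_injective (add_left_injective 1)).mul_left _)
    calc ‖∑' e, aa q N (e + 1)‖ ≤ ∑' e, ‖aa q N (e + 1)‖ :=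
          norm_tsum_le_tsum_norm hsN
      _ ≤ ∑' e, ‖q‖ ^ (2 * N) * ‖aa q 0 (e + 1)‖ := by
          apply Summable.tsum_le_tsum _ hsN hs0'
          intro e
          rw [norm_aa, norm_aa, ← mul_div_assoc, ← pow_add]
          rw [div_le_div_iff_of_pos_right (norm_pos_iff.mpr (qfac_ne_zero hq (e + 1)))]
          apply pow_le_pow_of_le_one (norm_nonneg q) (le_of_lt hq)
          nlinarith [e.zero_le, N.zero_le]
      _ = ‖q‖ ^ (2 * N) * S := tsum_mul_left
  -- find N with Fq q N ≠ 0
  have htend : Filter.Tendsto (fun N : ℕ => ‖q‖ ^ (2 * N) * S) Filter.atTop (nhds 0) := by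
    have h1 : Filter.Tendsto (fun N : ℕ => ‖q‖ ^ (2 * N)) Filter.atTop (nhds 0) := by
      have := tendsto_pow_atTop_nhds_zero_of_lt_one (norm_nonneg q) hq
      exact this.comp (Filter.tendsto_atTop_mono (fun d => by simp only [id_eq]; omega)
        Filter.tendsto_id)
    simpa using h1.mul_const S
  have hev : ∀ᶠ N : ℕ in Filter.atTop, ‖q‖ ^ (2 * N) * S < 1 := htend.eventually_lt_const one_pos
  intro h0
  obtain ⟨N, hN1, hN2⟩ := (hev.and (Filter.eventually_ge_atTop n)).exists
  have hFN : Fq q N = 0 := hup n N hN2 h0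
  have := hbound N
  rw [hFN] at this
  simp only [zero_sub, norm_neg, norm_one] at this
  linarith

@[simp] lemma qfac_zero (q : ℂ) : qfac q 0 = 1 := by simp [qfac]

/-- Gaussian binomial coefficient at base `q²`. -/
noncomputable def gb (q : ℂ) : ℕ → ℕ → ℂ
  | _, 0 => 1
  | 0, _ + 1 => 0
  | k + 1, e + 1 => gb q k e + q ^ (2 * (e + 1)) * gb q k (e + 1)

@[simp] lemma gb_zero (q : ℂ) (k : ℕ) : gb q k 0 = 1 := by cases k <;> rfl

lemma gb_eq_zero (q : ℂ) {k e : ℕ} (h : k < e) : gb q k e = 0 := by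
  induction k generalizing e with
  | zero => cases e with
    | zero => omega
    | succ e => rfl
  | succ k ih =>
    cases e with
    | zero => omega
    | succ e =>
      show gb q k e + q ^ (2 * (e + 1)) * gb q k (e + 1) = 0
      rw [ih (by omega), ih (by omega), mul_zero, add_zero]

lemma gb_self (q : ℂ) (k : ℕ) : gb q k k = 1 := by
  induction k with
  | zero => rfl
  | succ k ih =>
    show gb q k k + q ^ (2 * (k + 1)) * gb q k (k + 1) = 1
    rw [ih, gb_eq_zero q (by omega), mul_zero, add_zero]

lemma gb_mul (q : ℂ) : ∀ k e : ℕ, e ≤ k →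
    gb q k e * (qfac q e * qfac q (k - e)) = qfac q k := by
  intro k
  induction k with
  | zero => intro e he; interval_cases e; simp
  | succ k ih =>
    intro e he
    cases e with
    | zero => simp
    | succ e =>
      show (gb q k e + q ^ (2 * (e + 1)) * gb q k (e + 1)) *
        (qfac q (e + 1) * qfac q (k + 1 - (e + 1))) = qfac q (k + 1)
      have h1 : k + 1 - (e + 1) = k - e := by omega
      rw [h1]
      rcases Nat.lt_or_ge e k with hek | hek
      · have h2 : k - e = (k - (e + 1)) + 1 := by omega
        have hq1 : qfac q (k - e) = qfac q (k - (e + 1)) * (1 - q ^ (2 * (k - (e + 1)) + 2)) := by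
          rw [h2, qfac_succ]
        have hx : q ^ (2 * e + 2) * q ^ (2 * (k - (e + 1)) + 2) = q ^ (2 * k + 2) := by
          rw [← pow_add]; congr 1; omega
        have ihe := ih e (by omega)
        have ihe1 := ih (e + 1) (by omega)
        rw [hq1] at ihe
        have h3 : k - (e + 1) = k - (e + 1) := rfl
        rw [qfac_succ q e] at ihe1 ⊢
        rw [qfac_succ q k, hq1]
        linear_combination (1 - q ^ (2 * e + 2)) * ihe +
          q ^ (2 * e + 2) * (1 - q ^ (2 * (k - (e + 1)) + 2)) * ihe1 - qfac q k * hx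
      · have hek' : e = k := by omega
        subst hek'
        rw [gb_eq_zero q (by omega : e < e + 1), gb_self, Nat.sub_self, qfac_zero]
        ring

lemma gauss_term (q t : ℂ) (k e : ℕ) :
    gb q (k + 1) (e + 1) * q ^ ((e + 1) * (e + 1 - 1)) * t ^ (e + 1)
      = gb q k (e + 1) * q ^ ((e + 1) * (e + 1 - 1)) * (t * q ^ 2) ^ (e + 1)
        + gb q k e * q ^ (e * (e - 1)) * (t * q ^ 2) ^ e * t := by
  have h1 : gb q (k + 1) (e + 1) = gb q k e + q ^ (2 * (e + 1)) * gb q k (e + 1) := rfl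
  have h2 : (t * q ^ 2 : ℂ) ^ e = t ^ e * q ^ (2 * e) := by
    rw [mul_pow, ← pow_mul]
  have h3 : (t * q ^ 2 : ℂ) ^ (e + 1) = t ^ (e + 1) * q ^ (2 * (e + 1)) := by
    rw [mul_pow, ← pow_mul]
  have h0 : (e + 1) * (e + 1 - 1) = e * (e - 1) + 2 * e := by
    cases e with
    | zero => rfl
    | succ s => simp only [Nat.add_sub_cancel]; ring
  rw [h1, h2, h3, h0, pow_add]
  ring

lemma gauss (q : ℂ) : ∀ (k : ℕ) (t : ℂ),
    ∏ j ∈ Finset.range k, (1 + t * q ^ (2 * j)) =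
      ∑ e ∈ Finset.range (k + 1), gb q k e * q ^ (e * (e - 1)) * t ^ e := by
  intro k
  induction k with
  | zero => intro t; simp [gb_zero]
  | succ k ih =>
    intro t
    rw [Finset.prod_range_succ']
    have h1 : ∀ j ∈ Finset.range k, 1 + t * q ^ (2 * (j + 1)) = 1 + t * q ^ 2 * q ^ (2 * j) := by
      intro j _
      rw [mul_assoc, ← pow_add]
      congr 3
      omega
    rw [Finset.prod_congr rfl h1, ih (t * q ^ 2)]
    have e0 : (1 : ℕ) ≤ k + 1 + 1 := by omega
    rw [Finset.sum_range_succ' (fun e => gb q (k + 1) e * q ^ (e * (e - 1)) * t ^ e) (k + 1)]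
    have hterm : ∀ e ∈ Finset.range (k + 1),
        gb q (k + 1) (e + 1) * q ^ ((e + 1) * (e + 1 - 1)) * t ^ (e + 1)
          = gb q k (e + 1) * q ^ ((e + 1) * (e + 1 - 1)) * (t * q ^ 2) ^ (e + 1)
            + gb q k e * q ^ (e * (e - 1)) * (t * q ^ 2) ^ e * t :=
      fun e _ => gauss_term q t k e
    rw [Finset.sum_congr rfl hterm, Finset.sum_add_distrib]
    -- first piece: extends to range k since top term vanishes
    have htop : ∑ e ∈ Finset.range (k + 1),
        gb q k (e + 1) * q ^ ((e + 1) * (e + 1 - 1)) * (t * q ^ 2) ^ (e + 1)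
        = ∑ e ∈ Finset.range k,
        gb q k (e + 1) * q ^ ((e + 1) * (e + 1 - 1)) * (t * q ^ 2) ^ (e + 1) := by
      rw [Finset.sum_range_succ, gb_eq_zero q (by omega : k < k + 1), zero_mul, zero_mul, add_zero]
    rw [htop]
    have hS : ∑ x ∈ Finset.range (k + 1), gb q k x * q ^ (x * (x - 1)) * (t * q ^ 2) ^ x
        = (∑ x ∈ Finset.range k,
            gb q k (x + 1) * q ^ ((x + 1) * (x + 1 - 1)) * (t * q ^ 2) ^ (x + 1)) + 1 := by
      rw [Finset.sum_range_succ' (fun e => gb q k e * q ^ (e * (e - 1)) * (t * q ^ 2) ^ e) k]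
      simp [gb_zero]
    rw [← Finset.sum_mul, hS]
    simp only [gb_zero, pow_zero, mul_one, Nat.zero_mul, Nat.zero_sub]
    ring

noncomputable def cc (q : ℂ) (d : ℕ) : ℂ := (-1) ^ d * q ^ d / qfac q d
noncomputable def ww (q : ℂ) (d n : ℕ) : ℂ := (-1) ^ d * q ^ (d * (2 * n + 1 - d)) / qfac q d

lemma PsiX1_eq (q : ℂ) (v : ℕ → ℂ) (n : ℕ) : PsiX1 q v n = Fq q n * v n := rfl
lemma PsiX2_eq (q : ℂ) (v : ℕ → ℂ) (n : ℕ) :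
    PsiX2 q v n = ∑ d ∈ Finset.range (n + 1), cc q d * v (n - d) := rfl
lemma PsiX12_eq (q : ℂ) (v : ℕ → ℂ) (n : ℕ) :
    PsiX12 q v n = ∑ d ∈ Finset.range (n + 1), ww q d n * v (n - d) := rfl

lemma Fq_prod {q : ℂ} (hq : ‖q‖ < 1) (m k : ℕ) :
    Fq q (m + k) = Fq q m * ∏ j ∈ Finset.range k, (1 + q ^ (2 * (m + j) + 1)) := by
  induction k with
  | zero => simp
  | succ k ih =>
    rw [← Nat.add_assoc, Fq_succ hq (m + k), ih, Finset.prod_range_succ]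
    ring

lemma key_term {q : ℂ} (hq : ‖q‖ < 1) (m k e : ℕ) (he : e ≤ k) :
    gb q k e * q ^ (e * (e - 1)) * (q ^ (2 * m + 1)) ^ e * cc q k
      = cc q (k - e) * ww q e (m + e) := by
  obtain ⟨j, rfl⟩ := Nat.exists_eq_add_of_le he
  unfold cc ww
  have hk := qfac_ne_zero hq (e + j)
  have he' := qfac_ne_zero hq e
  have hje := qfac_ne_zero hq j
  have hgb := gb_mul q (e + j) e (by omega)
  rw [Nat.add_sub_cancel_left] at hgb ⊢
  have hsign : ((-1 : ℂ)) ^ j * (-1) ^ e = (-1) ^ (e + j) := by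
    rw [← pow_add]; congr 1; omega
  have hexp1 : e * (2 * (m + e) + 1 - e) = e * (2 * m + e + 1) := by
    congr 1; omega
  have hexp2 : q ^ (e * (e - 1)) * (q ^ (2 * m + 1)) ^ e * q ^ (e + j)
      = q ^ j * q ^ (e * (2 * m + e + 1)) := by
    rw [← pow_mul, ← pow_add, ← pow_add, ← pow_add]
    congr 1
    cases e with
    | zero => omega
    | succ s =>
      simp only [Nat.add_sub_cancel]
      ring
  rw [hexp1]
  field_simp
  linear_combination (gb q (e+j) e * (-1)^(e+j) * (qfac q j * qfac q e)) * hexp2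
    + ((-1)^j * (-1)^e * q^j * q^(e*(2*m+e+1))) * hgb
    - (q^j * q^(e*(2*m+e+1)) * gb q (e+j) e * qfac q j * qfac q e) * hsign
lemma key {q : ℂ} (hq : ‖q‖ < 1) (m k : ℕ) :
    Fq q (m + k) * cc q k
      = Fq q m * ∑ e ∈ Finset.range (k + 1), cc q (k - e) * ww q e (m + e) := by
  rw [Fq_prod hq m k, mul_assoc]
  congr 1
  have h1 : ∀ j ∈ Finset.range k, (1 + q ^ (2 * (m + j) + 1))
      = 1 + q ^ (2 * m + 1) * q ^ (2 * j) := by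
    intro j _
    rw [← pow_add]
    congr 2
    omega
  rw [Finset.prod_congr rfl h1, gauss q k (q ^ (2 * m + 1)), Finset.sum_mul]
  exact Finset.sum_congr rfl fun e he =>
    key_term hq m k e (Nat.lt_succ_iff.mp (Finset.mem_range.mp he))

lemma wall {q : ℂ} (hq : ‖q‖ < 1) (v : ℕ → ℂ) :
    PsiX1 q (PsiX2 q v) = PsiX2 q (PsiX12 q (PsiX1 q v)) := by
  funext n
  rw [PsiX1_eq, PsiX2_eq, Finset.mul_sum]
  have hL : ∀ k ∈ Finset.range (n + 1), Fq q n * (cc q k * v (n - k))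
      = ∑ e ∈ Finset.range (k + 1),
          Fq q (n - k) * (cc q (k - e) * ww q e (n - k + e)) * v (n - k) := by
    intro k hk
    have hk' : k ≤ n := Nat.lt_succ_iff.mp (Finset.mem_range.mp hk)
    have h1 := key hq (n - k) k
    rw [Nat.sub_add_cancel hk'] at h1
    calc Fq q n * (cc q k * v (n - k)) = Fq q n * cc q k * v (n - k) := by ring
      _ = (Fq q (n - k) * ∑ e ∈ Finset.range (k + 1), cc q (k - e) * ww q e (n - k + e))
            * v (n - k) := by rw [h1]
      _ = _ := by rw [Finset.mul_sum, Finset.sum_mul]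
  rw [Finset.sum_congr rfl hL]
  have hR : PsiX2 q (PsiX12 q (PsiX1 q v)) n
      = ∑ d ∈ Finset.range (n + 1), ∑ e ∈ Finset.range (n - d + 1),
          cc q d * (ww q e (n - d) * (Fq q (n - d - e) * v (n - d - e))) := by
    rw [PsiX2_eq]
    refine Finset.sum_congr rfl fun d _ => ?_
    rw [PsiX12_eq, Finset.mul_sum]
    refine Finset.sum_congr rfl fun e _ => ?_
    rw [PsiX1_eq]
  rw [hR]
  rw [Finset.sum_sigma', Finset.sum_sigma']
  refine Finset.sum_nbij' (fun p => ⟨p.1 - p.2, p.2⟩) (fun p => ⟨p.1 + p.2, p.2⟩)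
    ?_ ?_ ?_ ?_ ?_
  · rintro ⟨k, e⟩ hp
    simp only [Finset.mem_sigma, Finset.mem_range] at hp ⊢
    omega
  · rintro ⟨d, e⟩ hp
    simp only [Finset.mem_sigma, Finset.mem_range] at hp ⊢
    omega
  · rintro ⟨k, e⟩ hp
    simp only [Finset.mem_sigma, Finset.mem_range] at hp
    have : k - e + e = k := by omega
    simp [this]
  · rintro ⟨d, e⟩ hp
    simp only [Finset.mem_sigma, Finset.mem_range] at hp
    simp
  · rintro ⟨k, e⟩ hp
    simp only [Finset.mem_sigma, Finset.mem_range] at hp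
    have h1 : n - (k - e) = n - k + e := by omega
    have h2 : n - (k - e) - e = n - k := by omega
    have h3 : n - k + e - e = n - k := by omega
    simp only [h1, h3]
    ring

lemma cc_zero (q : ℂ) : cc q 0 = 1 := by simp [cc, qfac_zero]
lemma ww_zero (q : ℂ) (n : ℕ) : ww q 0 n = 1 := by simp [ww, qfac_zero]

/-- `v` vanishes below `n`, equals `x` at `n` and `y` at `n+1`. -/
def OK (v : ℕ → ℂ) (n : ℕ) (x y : ℂ) : Prop :=
  (∀ m, m < n → v m = 0) ∧ v n = x ∧ v (n + 1) = y

section OKlemmas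
variable {q : ℂ} {v : ℕ → ℂ} {n : ℕ} {x y : ℂ}

lemma OK_conv {co : ℕ → ℕ → ℂ} (hco : ∀ p, co p 0 = 1)
    (h : OK v n x y) :
    OK (fun p => ∑ d ∈ Finset.range (p + 1), co p d * v (p - d)) n x (y + co (n + 1) 1 * x) := by
  obtain ⟨h0, hx, hy⟩ := h
  refine ⟨fun m hm => ?_, ?_, ?_⟩
  · exact Finset.sum_eq_zero fun d hd => by rw [h0 (m - d) (by omega), mul_zero]
  · show (∑ d ∈ Finset.range (n + 1), co n d * v (n - d)) = x
    rw [Finset.sum_eq_single 0]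
    · rw [hco, Nat.sub_zero, hx, one_mul]
    · intro d hd hd0
      rw [h0 (n - d) (by simp at hd; omega), mul_zero]
    · intro h; simp at h
  · show (∑ d ∈ Finset.range (n + 1 + 1), co (n + 1) d * v (n + 1 - d)) = y + co (n + 1) 1 * x
    rw [Finset.sum_range_succ' _ (n + 1), Finset.sum_range_succ' _ n]
    have hz : ∀ i ∈ Finset.range n, co (n + 1) (i + 1 + 1) * v (n + 1 - (i + 1 + 1)) = 0 := by
      intro i hi
      rw [h0 (n + 1 - (i + 1 + 1)) (by simp at hi; omega), mul_zero]
    rw [Finset.sum_congr rfl hz, Finset.sum_const_zero, zero_add]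
    simp only [Nat.add_sub_cancel, Nat.sub_zero, hco, one_mul]
    rw [hx, hy]
    ring

lemma OK_PsiX2 (h : OK v n x y) : OK (PsiX2 q v) n x (y + cc q 1 * x) := by
  have := OK_conv (co := fun _ d => cc q d) (fun p => cc_zero q) h
  simpa only [← PsiX2_eq] using this

lemma OK_PsiX12 (h : OK v n x y) : OK (PsiX12 q v) n x (y + ww q 1 (n + 1) * x) := by
  have := OK_conv (co := fun p d => ww q d p) (fun p => ww_zero q p) h
  simpa only [← PsiX12_eq] using this

lemma OK_PsiX1 (h : OK v n x y) : OK (PsiX1 q v) n (Fq q n * x) (Fq q (n + 1) * y) := by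
  obtain ⟨h0, hx, hy⟩ := h
  exact ⟨fun m hm => by rw [PsiX1_eq, h0 m hm, mul_zero], by rw [PsiX1_eq, hx],
    by rw [PsiX1_eq, hy]⟩

lemma OK_PsiX2_iter (a : ℕ) (h : OK v n x y) :
    OK ((PsiX2 q)^[a] v) n x (y + a * (cc q 1 * x)) := by
  induction a generalizing v y with
  | zero => simpa using h
  | succ a ih =>
    rw [Function.iterate_succ_apply']
    have := OK_PsiX2 (q := q) (ih h)
    rw [show y + (a : ℂ) * (cc q 1 * x) + cc q 1 * x
        = y + ((a : ℕ) + 1 : ℂ) * (cc q 1 * x) from by push_cast; ring] at this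
    convert this using 3
    push_cast
    ring

lemma OK_PsiX12_iter (b : ℕ) (h : OK v n x y) :
    OK ((PsiX12 q)^[b] v) n x (y + b * (ww q 1 (n + 1) * x)) := by
  induction b generalizing v y with
  | zero => simpa using h
  | succ b ih =>
    rw [Function.iterate_succ_apply']
    have := OK_PsiX12 (q := q) (ih h)
    rw [show y + (b : ℂ) * (ww q 1 (n + 1) * x) + ww q 1 (n + 1) * x
        = y + ((b : ℕ) + 1 : ℂ) * (ww q 1 (n + 1) * x) from by push_cast; ring] at this
    convert this using 3
    push_cast
    ring

lemma OK_PsiX1_iter (c : ℕ) (h : OK v n x y) :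
    OK ((PsiX1 q)^[c] v) n (Fq q n ^ c * x) (Fq q (n + 1) ^ c * y) := by
  induction c generalizing v x y with
  | zero => simpa using h
  | succ c ih =>
    rw [Function.iterate_succ_apply']
    have := OK_PsiX1 (q := q) (ih h)
    rw [show Fq q n * (Fq q n ^ c * x) = Fq q n ^ (c + 1) * x from by ring,
      show Fq q (n + 1) * (Fq q (n + 1) ^ c * y) = Fq q (n + 1) ^ (c + 1) * y from by ring] at this
    exact this

end OKlemmas

lemma uniqueness {q : ℂ} (hq : ‖q‖ < 1) (hq0 : q ≠ 0) (a b c : ℕ)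
    (h : ∀ v : ℕ → ℂ, (PsiX2 q)^[a] ((PsiX12 q)^[b] ((PsiX1 q)^[c] v)) =
        PsiX1 q (PsiX2 q v)) :
    a = 1 ∧ b = 1 ∧ c = 1 := by
  -- evaluate on delta vectors
  have hdelta : ∀ n : ℕ, OK (fun m => if m = n then (1 : ℂ) else 0) n 1 0 :=
    fun n => ⟨fun m hm => if_neg (by omega), if_pos rfl, if_neg (by omega)⟩
  have hE : ∀ n : ℕ, OK ((PsiX2 q)^[a] ((PsiX12 q)^[b] ((PsiX1 q)^[c]
      (fun m => if m = n then (1 : ℂ) else 0)))) n (Fq q n ^ c)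
      ((Fq q (n + 1) ^ c * 0 + b * (ww q 1 (n + 1) * (Fq q n ^ c)))
        + a * (cc q 1 * (Fq q n ^ c))) := by
    intro n
    have h1 := OK_PsiX1_iter (q := q) c (hdelta n)
    rw [mul_one] at h1
    exact OK_PsiX2_iter a (OK_PsiX12_iter b h1)
  have hRHS : ∀ n : ℕ, OK (PsiX1 q (PsiX2 q (fun m => if m = n then (1 : ℂ) else 0))) n
      (Fq q n * 1) (Fq q (n + 1) * (0 + cc q 1 * 1)) :=
    fun n => OK_PsiX1 (OK_PsiX2 (hdelta n))
  -- diagonal equation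
  have E1 : ∀ n : ℕ, Fq q n ^ c = Fq q n := by
    intro n
    have := congrFun (h (fun m => if m = n then (1 : ℂ) else 0)) n
    rw [(hE n).2.1, (hRHS n).2.1, mul_one] at this
    exact this
  -- subdiagonal equation
  have E2 : ∀ n : ℕ, (b : ℂ) * (ww q 1 (n + 1) * Fq q n ^ c)
      + a * (cc q 1 * Fq q n ^ c) = Fq q (n + 1) * cc q 1 := by
    intro n
    have := congrFun (h (fun m => if m = n then (1 : ℂ) else 0)) (n + 1)
    rw [(hE n).2.2, (hRHS n).2.2] at this
    linear_combination this
  -- basic nonvanishing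
  have hu : ∀ n : ℕ, (1 : ℂ) + q ^ (2 * n + 1) ≠ 0 := by
    intro n hcon
    have h1 : ‖q ^ (2 * n + 1)‖ < 1 := by
      rw [norm_pow]; exact pow_lt_one₀ (norm_nonneg q) hq (by omega)
    have h2 : q ^ (2 * n + 1) = -1 := by linear_combination hcon
    rw [h2, norm_neg, norm_one] at h1; exact lt_irrefl _ h1
  have hF := Fq_ne_zero hq hq0
  -- step 1 : c = 1
  have hroots : ∀ n : ℕ, (1 + q ^ (2 * n + 1)) ^ c = 1 + q ^ (2 * n + 1) := by
    intro n
    have h1 := E1 (n + 1)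
    rw [Fq_succ hq n, mul_pow, E1 n] at h1
    exact mul_right_cancel₀ (hF n) h1
  have hc : c = 1 := by
    by_contra hc1
    rcases Nat.lt_or_ge c 1 with hc0 | hc2
    · -- c = 0
      interval_cases c
      have := hroots 0
      rw [pow_zero] at this
      have : q ^ (2 * 0 + 1) = 0 := by linear_combination -this
      simp at this
      exact hq0 this
    · have hc2' : 2 ≤ c := by omega
      set m := c - 1 with hm
      have hmc : c = m + 1 := by omega
      have hrm : ∀ n : ℕ, (1 + q ^ (2 * n + 1)) ^ m = 1 := by
        intro n
        have h1 := hroots n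
        rw [hmc, pow_succ] at h1
        have h2 : (1 + q ^ (2 * n + 1)) ^ m * (1 + q ^ (2 * n + 1))
            = 1 * (1 + q ^ (2 * n + 1)) := by rw [one_mul]; exact h1
        exact mul_right_cancel₀ (hu n) h2
      -- infinitely many m-th roots of unity: contradiction
      have hfin : Set.Finite {x : ℂ | x ^ m = 1} := by
        have hp : (Polynomial.X ^ m - Polynomial.C (1 : ℂ)) ≠ 0 :=
          Polynomial.X_pow_sub_C_ne_zero (by omega) 1
        have := Polynomial.finite_setOf_isRoot hp
        convert this using 1
        ext x
        simp [Polynomial.IsRoot, sub_eq_zero]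
      have hinj : Function.Injective (fun n : ℕ => (1 : ℂ) + q ^ (2 * n + 1)) := by
        intro n1 n2 h12
        by_contra hne
        have hqq : q ^ (2 * n1 + 1) = q ^ (2 * n2 + 1) := by
          have := h12
          simpa using this
        have hnorm : ‖q‖ ^ (2 * n1 + 1) = ‖q‖ ^ (2 * n2 + 1) := by
          rw [← norm_pow, ← norm_pow, hqq]
        have h0 : 0 < ‖q‖ := norm_pos_iff.mpr hq0
        rcases Nat.lt_or_ge n1 n2 with hlt | hge
        · have := pow_lt_pow_right_of_lt_one₀ h0 hq (by omega : 2 * n1 + 1 < 2 * n2 + 1)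
          rw [hnorm] at this; exact lt_irrefl _ this
        · have hlt2 : n2 < n1 := by omega
          have := pow_lt_pow_right_of_lt_one₀ h0 hq (by omega : 2 * n2 + 1 < 2 * n1 + 1)
          rw [hnorm] at this; exact lt_irrefl _ this
      exact (Set.infinite_of_injective_forall_mem hinj (fun n => hrm n)) hfin
  -- step 2 : b = 1, a = 1
  subst hc
  simp only [pow_one] at E2
  have hcc1 : cc q 1 ≠ 0 := by
    unfold cc
    apply div_ne_zero _ (qfac_ne_zero hq 1)
    simp [hq0]
  have hww : ∀ n : ℕ, ww q 1 (n + 1) = q ^ (2 * n + 1) * cc q 1 := by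
    intro n
    unfold ww cc
    have he : 1 * (2 * (n + 1) + 1 - 1) = (2 * n + 1) + 1 := by omega
    rw [he, pow_add]
    ring
  have E3 : ∀ n : ℕ, (b : ℂ) * q ^ (2 * n + 1) + a = 1 + q ^ (2 * n + 1) := by
    intro n
    have h2 := E2 n
    rw [hww n, Fq_succ hq n] at h2
    have h3 : ((b : ℂ) * q ^ (2 * n + 1) + a) * (cc q 1 * Fq q n)
        = (1 + q ^ (2 * n + 1)) * (cc q 1 * Fq q n) := by linear_combination h2
    exact mul_right_cancel₀ (mul_ne_zero hcc1 (hF n)) h3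
  have hb : (b : ℂ) = 1 := by
    have h0 := E3 0
    have h1 := E3 1
    have hqq : q * (1 - q ^ 2) ≠ 0 :=
      mul_ne_zero hq0 (one_sub_pow_ne_zero hq (by omega))
    have : ((b : ℂ) - 1) * (q * (1 - q ^ 2)) = 0 := by
      push_cast at h0 h1 ⊢
      ring_nf
      ring_nf at h0 h1
      linear_combination h0 - h1
    rcases mul_eq_zero.mp this with h | h
    · linear_combination h
    · exact absurd h hqq
  have ha : (a : ℂ) = 1 := by
    have h0 := E3 0
    rw [hb] at h0
    linear_combination h0
  exact ⟨Nat.cast_injective.eq_iff.mp (by exact_mod_cast ha),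
    Nat.cast_injective.eq_iff.mp (by exact_mod_cast hb), rfl⟩

/-- The A₂ wall-crossing formula
`Ψ(-X_{α₁})Ψ(-X_{α₂}) = Ψ(-X_{α₂})Ψ(-X_{α₁+α₂})Ψ(-X_{α₁})`, together with uniqueness of
the BPS degeneracies: any product `Ψ(-X_{α₂})^a Ψ(-X_{α₁+α₂})^b Ψ(-X_{α₁})^c` over the
positive roots, in the slope ordering, that equals the left-hand side must have
`a = b = c = 1`. -/
theorem a2_wall_crossing_unique (q : ℂ) (hq : ‖q‖ < 1) (hq0 : q ≠ 0) :
    (∀ v : ℕ → ℂ, PsiX1 q (PsiX2 q v) = PsiX2 q (PsiX12 q (PsiX1 q v))) ∧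
    ∀ a b c : ℕ,
      (∀ v : ℕ → ℂ, (PsiX2 q)^[a] ((PsiX12 q)^[b] ((PsiX1 q)^[c] v)) =
          PsiX1 q (PsiX2 q v)) →
      a = 1 ∧ b = 1 ∧ c = 1 := by
  refine ⟨wall hq, fun a b c h => uniqueness hq hq0 a b c h⟩
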